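/- Pappus' hexagon theorem for the Euclidean plane: If A₁, A₂, A₃ are distinct points on a line g_a and B₁, B₂, B₃ are distinct points on a line g_b in ℝ², and the points M₁ = line(A₁B₁) ∩ line(A₃B₂), M₂ = line(A₂B₂) ∩ line(A₁B₃), M₃ = line(A₃B₃) ∩ line(A₂B₁) all exist, then M₁, M₂, M₃ are collinear. -/

import Mathlib

private lemma cross_of_collinear {p q r : ℝ × ℝ}
    (h : Collinear ℝ ({p, q, r} : Set (ℝ × ℝ))) :
    (q.1 - p.1) * (r.2 - p.2) - (q.2 - p.2) * (r.1 - p.1) = 0 := by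
  rw [collinear_iff_of_mem (Set.mem_insert p {q, r})] at h
  obtain ⟨v, hv⟩ := h
  obtain ⟨cq, hq⟩ := hv q (by simp)
  obtain ⟨cr, hr⟩ := hv r (by simp)
  rw [hq, hr]
  simp only [vadd_eq_add, Prod.fst_add, Prod.snd_add, Prod.smul_fst, Prod.smul_snd,
    smul_eq_mul]
  ring

private lemma collinear_of_cross {p q r : ℝ × ℝ}
    (h : (q.1 - p.1) * (r.2 - p.2) - (q.2 - p.2) * (r.1 - p.1) = 0) :
    Collinear ℝ ({p, q, r} : Set (ℝ × ℝ)) := by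
  rw [collinear_iff_of_mem (Set.mem_insert p {q, r})]
  by_cases hq : q = p
  · refine ⟨r - p, fun x hx => ?_⟩
    simp only [Set.mem_insert_iff, Set.mem_singleton_iff] at hx
    rcases hx with rfl | rfl | rfl
    exacts [⟨0, by simp⟩, ⟨0, by simp [hq]⟩, ⟨1, by simp⟩]
  · refine ⟨q - p, fun x hx => ?_⟩
    simp only [Set.mem_insert_iff, Set.mem_singleton_iff] at hx
    rcases hx with rfl | rfl | rfl
    · exact ⟨0, by simp⟩
    · exact ⟨1, by simp⟩
    · have hq' : q.1 - p.1 ≠ 0 ∨ q.2 - p.2 ≠ 0 := by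
        by_contra hc
        push_neg at hc
        exact hq (Prod.ext (by linarith [hc.1]) (by linarith [hc.2]))
      rcases hq' with h1 | h1
      · refine ⟨(x.1 - p.1) / (q.1 - p.1), Prod.ext ?_ ?_⟩ <;>
          simp only [vadd_eq_add, Prod.fst_add, Prod.snd_add, Prod.smul_fst, Prod.smul_snd,
            smul_eq_mul, Prod.fst_sub, Prod.snd_sub]
        · field_simp
          ring
        · field_simp
          linear_combination h
      · refine ⟨(x.2 - p.2) / (q.2 - p.2), Prod.ext ?_ ?_⟩ <;>
          simp only [vadd_eq_add, Prod.fst_add, Prod.snd_add, Prod.smul_fst, Prod.smul_snd,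
            smul_eq_mul, Prod.fst_sub, Prod.snd_sub]
        · field_simp
          linear_combination -h
        · field_simp
          ring

set_option maxHeartbeats 1000000 in
private lemma pappus_key (al1 al2 be1 be2 ga1 ga2 t u m1x m1y m2x m2y m3x m3y : ℝ)
    (e1 : ((be1 - 0)) * ((m1y - 0)) - ((be2 - 0)) * ((m1x - 0)) = 0)
    (e2 : ((ga1 - (t * al1))) * ((m1y - (t * al2))) - ((ga2 - (t * al2))) * ((m1x - (t * al1))) = 0)
    (e3 : ((ga1 - al1)) * ((m2y - al2)) - ((ga2 - al2)) * ((m2x - al1)) = 0)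
    (e4 : (((be1 + (u * (ga1 - be1))) - 0)) * ((m2y - 0)) - (((be2 + (u * (ga2 - be2))) - 0)) * ((m2x - 0)) = 0)
    (e5 : (((be1 + (u * (ga1 - be1))) - (t * al1))) * ((m3y - (t * al2))) - (((be2 + (u * (ga2 - be2))) - (t * al2))) * ((m3x - (t * al1))) = 0)
    (e6 : ((be1 - al1)) * ((m3y - al2)) - ((be2 - al2)) * ((m3x - al1)) = 0)
    (hd1 : ((((be1 - 0) * (ga2 - (t * al2))) - ((be2 - 0) * (ga1 - (t * al1))))) ≠ 0)
    (hd2 : ((((ga1 - al1) * ((be2 + (u * (ga2 - be2))) - 0)) - ((ga2 - al2) * ((be1 + (u * (ga1 - be1))) - 0)))) ≠ 0)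
    (hd3 : (((((be1 + (u * (ga1 - be1))) - (t * al1)) * (be2 - al2)) - (((be2 + (u * (ga2 - be2))) - (t * al2)) * (be1 - al1)))) ≠ 0) :
    (m2x - m1x) * (m3y - m1y) - (m2y - m1y) * (m3x - m1x) = 0 := by
  have hm1x : ((((be1 - 0) * (ga2 - (t * al2))) - ((be2 - 0) * (ga1 - (t * al1))))) * m1x = (((ga1 - (t * al1)) * (((be1 - 0) * 0) - ((be2 - 0) * 0))) - ((be1 - 0) * (((ga1 - (t * al1)) * (t * al2)) - ((ga2 - (t * al2)) * (t * al1))))) := by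
    linear_combination ((ga1 - (t * al1))) * e1 - ((be1 - 0)) * e2
  have hm1y : ((((be1 - 0) * (ga2 - (t * al2))) - ((be2 - 0) * (ga1 - (t * al1))))) * m1y = (((ga2 - (t * al2)) * (((be1 - 0) * 0) - ((be2 - 0) * 0))) - ((be2 - 0) * (((ga1 - (t * al1)) * (t * al2)) - ((ga2 - (t * al2)) * (t * al1))))) := by
    linear_combination ((ga2 - (t * al2))) * e1 - ((be2 - 0)) * e2
  have hm2x : ((((ga1 - al1) * ((be2 + (u * (ga2 - be2))) - 0)) - ((ga2 - al2) * ((be1 + (u * (ga1 - be1))) - 0)))) * m2x = ((((be1 + (u * (ga1 - be1))) - 0) * (((ga1 - al1) * al2) - ((ga2 - al2) * al1))) - ((ga1 - al1) * ((((be1 + (u * (ga1 - be1))) - 0) * 0) - (((be2 + (u * (ga2 - be2))) - 0) * 0)))) := by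
    linear_combination (((be1 + (u * (ga1 - be1))) - 0)) * e3 - ((ga1 - al1)) * e4
  have hm2y : ((((ga1 - al1) * ((be2 + (u * (ga2 - be2))) - 0)) - ((ga2 - al2) * ((be1 + (u * (ga1 - be1))) - 0)))) * m2y = ((((be2 + (u * (ga2 - be2))) - 0) * (((ga1 - al1) * al2) - ((ga2 - al2) * al1))) - ((ga2 - al2) * ((((be1 + (u * (ga1 - be1))) - 0) * 0) - (((be2 + (u * (ga2 - be2))) - 0) * 0)))) := by
    linear_combination (((be2 + (u * (ga2 - be2))) - 0)) * e3 - ((ga2 - al2)) * e4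
  have hm3x : (((((be1 + (u * (ga1 - be1))) - (t * al1)) * (be2 - al2)) - (((be2 + (u * (ga2 - be2))) - (t * al2)) * (be1 - al1)))) * m3x = (((be1 - al1) * ((((be1 + (u * (ga1 - be1))) - (t * al1)) * (t * al2)) - (((be2 + (u * (ga2 - be2))) - (t * al2)) * (t * al1)))) - (((be1 + (u * (ga1 - be1))) - (t * al1)) * (((be1 - al1) * al2) - ((be2 - al2) * al1)))) := by
    linear_combination ((be1 - al1)) * e5 - (((be1 + (u * (ga1 - be1))) - (t * al1))) * e6
  have hm3y : (((((be1 + (u * (ga1 - be1))) - (t * al1)) * (be2 - al2)) - (((be2 + (u * (ga2 - be2))) - (t * al2)) * (be1 - al1)))) * m3y = (((be2 - al2) * ((((be1 + (u * (ga1 - be1))) - (t * al1)) * (t * al2)) - (((be2 + (u * (ga2 - be2))) - (t * al2)) * (t * al1)))) - (((be2 + (u * (ga2 - be2))) - (t * al2)) * (((be1 - al1) * al2) - ((be2 - al2) * al1)))) := by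
    linear_combination ((be2 - al2)) * e5 - (((be2 + (u * (ga2 - be2))) - (t * al2))) * e6
  have p1 := congrArg₂ (· * ·) hm2x hm3y
  have p2 := congrArg₂ (· * ·) hm2y hm3x
  have p3 := congrArg₂ (· * ·) hm2x hm1y
  have p4 := congrArg₂ (· * ·) hm2y hm1x
  have p5 := congrArg₂ (· * ·) hm1x hm3y
  have p6 := congrArg₂ (· * ·) hm1y hm3x
  have key : ((m2x - m1x) * (m3y - m1y) - (m2y - m1y) * (m3x - m1x)) *
      (((((be1 - 0) * (ga2 - (t * al2))) - ((be2 - 0) * (ga1 - (t * al1))))) * (((((ga1 - al1) * ((be2 + (u * (ga2 - be2))) - 0)) - ((ga2 - al2) * ((be1 + (u * (ga1 - be1))) - 0)))) * (((((be1 + (u * (ga1 - be1))) - (t * al1)) * (be2 - al2)) - (((be2 + (u * (ga2 - be2))) - (t * al2)) * (be1 - al1)))))) = 0 := by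
    linear_combination ((((be1 - 0) * (ga2 - (t * al2))) - ((be2 - 0) * (ga1 - (t * al1))))) * p1 - ((((be1 - 0) * (ga2 - (t * al2))) - ((be2 - 0) * (ga1 - (t * al1))))) * p2 - (((((be1 + (u * (ga1 - be1))) - (t * al1)) * (be2 - al2)) - (((be2 + (u * (ga2 - be2))) - (t * al2)) * (be1 - al1)))) * p3 + (((((be1 + (u * (ga1 - be1))) - (t * al1)) * (be2 - al2)) - (((be2 + (u * (ga2 - be2))) - (t * al2)) * (be1 - al1)))) * p4 -
      ((((ga1 - al1) * ((be2 + (u * (ga2 - be2))) - 0)) - ((ga2 - al2) * ((be1 + (u * (ga1 - be1))) - 0)))) * p5 + ((((ga1 - al1) * ((be2 + (u * (ga2 - be2))) - 0)) - ((ga2 - al2) * ((be1 + (u * (ga1 - be1))) - 0)))) * p6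
  exact (mul_eq_zero.mp key).resolve_right
    (mul_ne_zero hd1 (mul_ne_zero hd2 hd3))

/-- Pappus' hexagon theorem in the Euclidean plane ℝ²: if A₁, A₂, A₃ are distinct
points on one line and B₁, B₂, B₃ are distinct points on another line, and the
intersection points M₁ = A₁B₁ ∩ A₃B₂, M₂ = A₂B₂ ∩ A₁B₃, M₃ = A₃B₃ ∩ A₂B₁ exist,
then M₁, M₂, M₃ are collinear. -/
theorem pappus_euclidean_plane
    (A₁ A₂ A₃ B₁ B₂ B₃ M₁ M₂ M₃ : ℝ × ℝ)
    (hA : Collinear ℝ ({A₁, A₂, A₃} : Set (ℝ × ℝ)))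
    (hB : Collinear ℝ ({B₁, B₂, B₃} : Set (ℝ × ℝ)))
    (hAdist : A₁ ≠ A₂ ∧ A₁ ≠ A₃ ∧ A₂ ≠ A₃)
    (hBdist : B₁ ≠ B₂ ∧ B₁ ≠ B₃ ∧ B₂ ≠ B₃)
    (hABdist : A₁ ≠ B₁ ∧ A₁ ≠ B₂ ∧ A₁ ≠ B₃ ∧ A₂ ≠ B₁ ∧ A₂ ≠ B₂ ∧ A₂ ≠ B₃ ∧
               A₃ ≠ B₁ ∧ A₃ ≠ B₂ ∧ A₃ ≠ B₃)
    -- the relevant pairs of lines are distinct so the intersection points exist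
    (hd₁ : ¬ (Collinear ℝ ({A₁, B₁, A₃} : Set (ℝ × ℝ)) ∧
              Collinear ℝ ({A₁, B₁, B₂} : Set (ℝ × ℝ))))
    (hd₂ : ¬ (Collinear ℝ ({A₂, B₂, A₁} : Set (ℝ × ℝ)) ∧
              Collinear ℝ ({A₂, B₂, B₃} : Set (ℝ × ℝ))))
    (hd₃ : ¬ (Collinear ℝ ({A₃, B₃, A₂} : Set (ℝ × ℝ)) ∧
              Collinear ℝ ({A₃, B₃, B₁} : Set (ℝ × ℝ))))
    -- the three intersection points
    (hM₁ : Collinear ℝ ({A₁, B₁, M₁} : Set (ℝ × ℝ)) ∧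
           Collinear ℝ ({A₃, B₂, M₁} : Set (ℝ × ℝ)))
    (hM₂ : Collinear ℝ ({A₂, B₂, M₂} : Set (ℝ × ℝ)) ∧
           Collinear ℝ ({A₁, B₃, M₂} : Set (ℝ × ℝ)))
    (hM₃ : Collinear ℝ ({A₃, B₃, M₃} : Set (ℝ × ℝ)) ∧
           Collinear ℝ ({A₂, B₁, M₃} : Set (ℝ × ℝ))) :
    Collinear ℝ ({M₁, M₂, M₃} : Set (ℝ × ℝ)) := by
  obtain ⟨hA12, hA13, hA23⟩ := hAdist
  obtain ⟨hB12, hB13, hB23⟩ := hBdist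
  obtain ⟨h11, h12, h13, h21, h22, h23, h31, h32, h33⟩ := hABdist
  have e1 := cross_of_collinear hM₁.1
  have e2 := cross_of_collinear hM₁.2
  have e3 := cross_of_collinear hM₂.1
  have e4 := cross_of_collinear hM₂.2
  have e5 := cross_of_collinear hM₃.1
  have e6 := cross_of_collinear hM₃.2
  have hw1 : (B₂.1 - A₃.1) ≠ 0 ∨ (B₂.2 - A₃.2) ≠ 0 := by
    by_contra hc
    push_neg at hc
    exact h32 (Prod.ext (by linarith [hc.1]) (by linarith [hc.2]))
  have hnd1 : (B₁.1 - A₁.1) * (B₂.2 - A₃.2) - (B₁.2 - A₁.2) * (B₂.1 - A₃.1) ≠ 0 := by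
    intro h0
    have hvu : (B₁.1 - A₁.1) * (M₁.2 - A₃.2) - (B₁.2 - A₁.2) * (M₁.1 - A₃.1) = 0 := by
      rcases hw1 with hh | hh
      · apply mul_left_cancel₀ hh
        linear_combination (B₁.1 - A₁.1) * e2 + (M₁.1 - A₃.1) * h0
      · apply mul_left_cancel₀ hh
        linear_combination (B₁.2 - A₁.2) * e2 + (M₁.2 - A₃.2) * h0
    refine hd₁ ⟨collinear_of_cross ?_, collinear_of_cross ?_⟩
    · linear_combination e1 - hvu
    · linear_combination h0 + e1 - hvu

  have hw2 : (B₃.1 - A₁.1) ≠ 0 ∨ (B₃.2 - A₁.2) ≠ 0 := by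
    by_contra hc
    push_neg at hc
    exact h13 (Prod.ext (by linarith [hc.1]) (by linarith [hc.2]))
  have hnd2 : (B₂.1 - A₂.1) * (B₃.2 - A₁.2) - (B₂.2 - A₂.2) * (B₃.1 - A₁.1) ≠ 0 := by
    intro h0
    have hvu : (B₂.1 - A₂.1) * (M₂.2 - A₁.2) - (B₂.2 - A₂.2) * (M₂.1 - A₁.1) = 0 := by
      rcases hw2 with hh | hh
      · apply mul_left_cancel₀ hh
        linear_combination (B₂.1 - A₂.1) * e4 + (M₂.1 - A₁.1) * h0
      · apply mul_left_cancel₀ hh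
        linear_combination (B₂.2 - A₂.2) * e4 + (M₂.2 - A₁.2) * h0
    refine hd₂ ⟨collinear_of_cross ?_, collinear_of_cross ?_⟩
    · linear_combination e3 - hvu
    · linear_combination h0 + e3 - hvu

  have hw3 : (B₁.1 - A₂.1) ≠ 0 ∨ (B₁.2 - A₂.2) ≠ 0 := by
    by_contra hc
    push_neg at hc
    exact h21 (Prod.ext (by linarith [hc.1]) (by linarith [hc.2]))
  have hnd3 : (B₃.1 - A₃.1) * (B₁.2 - A₂.2) - (B₃.2 - A₃.2) * (B₁.1 - A₂.1) ≠ 0 := by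
    intro h0
    have hvu : (B₃.1 - A₃.1) * (M₃.2 - A₂.2) - (B₃.2 - A₃.2) * (M₃.1 - A₂.1) = 0 := by
      rcases hw3 with hh | hh
      · apply mul_left_cancel₀ hh
        linear_combination (B₃.1 - A₃.1) * e6 + (M₃.1 - A₂.1) * h0
      · apply mul_left_cancel₀ hh
        linear_combination (B₃.2 - A₃.2) * e6 + (M₃.2 - A₂.2) * h0
    refine hd₃ ⟨collinear_of_cross ?_, collinear_of_cross ?_⟩
    · linear_combination e5 - hvu
    · linear_combination h0 + e5 - hvu

  obtain ⟨v, hv⟩ := (collinear_iff_of_mem (Set.mem_insert A₁ {A₂, A₃})).1 hA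
  obtain ⟨r2, hr2⟩ := hv A₂ (by simp)
  obtain ⟨r3, hr3⟩ := hv A₃ (by simp)
  obtain ⟨w, hw⟩ := (collinear_iff_of_mem (Set.mem_insert B₁ {B₂, B₃})).1 hB
  obtain ⟨s2, hs2⟩ := hw B₂ (by simp)
  obtain ⟨s3, hs3⟩ := hw B₃ (by simp)
  have hr20 : r2 ≠ 0 := by
    rintro rfl
    apply hA12
    have h : A₂ = A₁ := by simpa using hr2
    exact h.symm
  have hs20 : s2 ≠ 0 := by
    rintro rfl
    apply hB12
    have h : B₂ = B₁ := by simpa using hs2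
    exact h.symm
  have h2x : A₂.1 = r2 * v.1 + A₁.1 := by
    rw [hr2]; simp [vadd_eq_add, Prod.smul_fst, smul_eq_mul]
  have h2y : A₂.2 = r2 * v.2 + A₁.2 := by
    rw [hr2]; simp [vadd_eq_add, Prod.smul_snd, smul_eq_mul]
  have h3x : A₃.1 = r3 * v.1 + A₁.1 := by
    rw [hr3]; simp [vadd_eq_add, Prod.smul_fst, smul_eq_mul]
  have h3y : A₃.2 = r3 * v.2 + A₁.2 := by
    rw [hr3]; simp [vadd_eq_add, Prod.smul_snd, smul_eq_mul]
  have hb2x : B₂.1 = s2 * w.1 + B₁.1 := by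
    rw [hs2]; simp [vadd_eq_add, Prod.smul_fst, smul_eq_mul]
  have hb2y : B₂.2 = s2 * w.2 + B₁.2 := by
    rw [hs2]; simp [vadd_eq_add, Prod.smul_snd, smul_eq_mul]
  have hb3x : B₃.1 = s3 * w.1 + B₁.1 := by
    rw [hs3]; simp [vadd_eq_add, Prod.smul_fst, smul_eq_mul]
  have hb3y : B₃.2 = s3 * w.2 + B₁.2 := by
    rw [hs3]; simp [vadd_eq_add, Prod.smul_snd, smul_eq_mul]
  have hA3x : A₃.1 = A₁.1 + (r3 / r2) * (A₂.1 - A₁.1) := by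
    rw [h3x, h2x]; field_simp; ring
  have hA3y : A₃.2 = A₁.2 + (r3 / r2) * (A₂.2 - A₁.2) := by
    rw [h3y, h2y]; field_simp; ring
  have hB3x : B₃.1 = B₁.1 + (s3 / s2) * (B₂.1 - B₁.1) := by
    rw [hb3x, hb2x]; field_simp; ring
  have hB3y : B₃.2 = B₁.2 + (s3 / s2) * (B₂.2 - B₁.2) := by
    rw [hb3y, hb2y]; field_simp; ring
  rw [hA3x, hA3y] at e2 hnd1
  rw [hA3x, hA3y, hB3x, hB3y] at e5 hnd3
  rw [hB3x, hB3y] at e4 hnd2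
  apply collinear_of_cross
  have main := pappus_key (A₂.1 - A₁.1) (A₂.2 - A₁.2) (B₁.1 - A₁.1) (B₁.2 - A₁.2)
      (B₂.1 - A₁.1) (B₂.2 - A₁.2) (r3 / r2) (s3 / s2)
      (M₁.1 - A₁.1) (M₁.2 - A₁.2) (M₂.1 - A₁.1) (M₂.2 - A₁.2)
      (M₃.1 - A₁.1) (M₃.2 - A₁.2)
      (by linear_combination e1) (by linear_combination e2) (by linear_combination e3)
      (by linear_combination e4) (by linear_combination e5) (by linear_combination e6)
      (fun h0 => hnd1 (by linear_combination h0))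
      (fun h0 => hnd2 (by linear_combination h0))
      (fun h0 => hnd3 (by linear_combination h0))
  linear_combination main
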